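/- Fix r with 1/2 < r < 1 and q > 3r²/(2 + r) (so that C(q) < 0), and let F and C be as defined. Let δ > 0 and let g : [0, δ) → ℝ be continuous with g(0) = 0, g(η) > 0 for η ∈ (0, δ), differentiable on (0, δ), and satisfying g'(η) = √(F(g(η), q)) for all η ∈ (0, δ). Then lim_{η → 0⁺} g(η)/η = √(−C(q)). -/

import Mathlib

open Filter

/-- The integration constant `C(q)` (for fixed `r`). -/
noncomputable def Ccoef (r q : ℝ) : ℝ := r * (3 * r ^ 2 - q * (2 + r)) / ((1 - r) * (4 - r ^ 2))

/-- The right-hand side `F(g,q)` of the reduced first-order ODE (for fixed `r`). -/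
noncomputable def Ffun (r q g : ℝ) : ℝ :=
  (1 - q) / (1 - r) * g ^ (2 - 2 * r) - 2 * (3 - q) / (2 - r) * g ^ (2 - r)
    + 3 * g ^ (2 : ℝ) - 2 / (2 + r) * g ^ (2 + r) - Ccoef r q

lemma Ffun_zero (r q : ℝ) (hr1 : 1 / 2 < r) (hr2 : r < 1) :
    Ffun r q 0 = -Ccoef r q := by
  have h1 : (2 - 2 * r) ≠ 0 := by nlinarith
  have h2 : (2 - r) ≠ 0 := by nlinarith
  have h3 : (2 : ℝ) ≠ 0 := by norm_num
  have h4 : (2 + r) ≠ 0 := by nlinarith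
  simp [Ffun, Real.zero_rpow, h1, h2, h3, h4]

lemma Ffun_contAt (r q : ℝ) (hr1 : 1 / 2 < r) (hr2 : r < 1) :
    ContinuousAt (fun x => Ffun r q x) 0 := by
  have h1 : (0:ℝ) < 2 - 2 * r := by nlinarith
  have h2 : (0:ℝ) < 2 - r := by nlinarith
  have h3 : (0:ℝ) < 2 := by norm_num
  have h4 : (0:ℝ) < 2 + r := by nlinarith
  have c1 := Real.continuousAt_rpow_const 0 (2 - 2 * r) (Or.inr h1.le)
  have c2 := Real.continuousAt_rpow_const 0 (2 - r) (Or.inr h2.le)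
  have c3 := Real.continuousAt_rpow_const 0 (2 : ℝ) (Or.inr h3.le)
  have c4 := Real.continuousAt_rpow_const 0 (2 + r) (Or.inr h4.le)
  unfold Ffun
  fun_prop

theorem gmKdV_cuspon_local_behavior
    (r q : ℝ) (hr1 : 1 / 2 < r) (hr2 : r < 1)
    (hq : q > 3 * r ^ 2 / (2 + r))
    (δ : ℝ) (hδ : 0 < δ)
    (g : ℝ → ℝ)
    (hcont : ContinuousOn g (Set.Ico 0 δ))
    (h0 : g 0 = 0)
    (hpos : ∀ η ∈ Set.Ioo 0 δ, 0 < g η)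
    (hODE : ∀ η ∈ Set.Ioo 0 δ, HasDerivAt g (Real.sqrt (Ffun r q (g η))) η) :
    Tendsto (fun η => g η / η) (nhdsWithin 0 (Set.Ioi 0))
      (nhds (Real.sqrt (-Ccoef r q))) := by
  have hrpos : (0:ℝ) < r := by linarith
  -- the mean value choice function
  have hmvt : ∀ η ∈ Set.Ioo 0 δ, ∃ c ∈ Set.Ioo 0 η,
      Real.sqrt (Ffun r q (g c)) = g η / η := by
    intro η hη
    obtain ⟨hη0, hηδ⟩ := hη
    have hsub : Set.Icc 0 η ⊆ Set.Ico 0 δ := fun x hx => ⟨hx.1, lt_of_le_of_lt hx.2 hηδ⟩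
    have hsub' : Set.Ioo 0 η ⊆ Set.Ioo 0 δ := fun x hx => ⟨hx.1, lt_trans hx.2 hηδ⟩
    obtain ⟨c, hc, hceq⟩ := exists_hasDerivAt_eq_slope g (fun x => Real.sqrt (Ffun r q (g x)))
      hη0 (hcont.mono hsub) (fun x hx => hODE x (hsub' hx))
    exact ⟨c, hc, by rw [hceq, h0]; ring_nf⟩
  classical
  set c : ℝ → ℝ := fun η => if h : η ∈ Set.Ioo 0 δ then (hmvt η h).choose else η with hcdef
  have hcIoo : ∀ η ∈ Set.Ioo 0 δ, c η ∈ Set.Ioo 0 η := by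
    intro η hη
    simp only [hcdef, dif_pos hη]
    exact (hmvt η hη).choose_spec.1
  have hceq : ∀ η ∈ Set.Ioo 0 δ, Real.sqrt (Ffun r q (g (c η))) = g η / η := by
    intro η hη
    simp only [hcdef, dif_pos hη]
    exact (hmvt η hη).choose_spec.2
  have hmem : Set.Ioo (0:ℝ) δ ∈ nhdsWithin (0:ℝ) (Set.Ioi 0) :=
    Ioo_mem_nhdsGT_of_mem ⟨le_refl 0, hδ⟩
  -- c tendsto 0 within Ioi 0
  have hc0 : Tendsto c (nhdsWithin 0 (Set.Ioi 0)) (nhdsWithin 0 (Set.Ioi 0)) := by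
    apply tendsto_nhdsWithin_of_tendsto_nhds_of_eventually_within
    · have hle : ∀ᶠ η in nhdsWithin (0:ℝ) (Set.Ioi 0), 0 ≤ c η ∧ c η ≤ η := by
        filter_upwards [hmem] with η hη
        exact ⟨(hcIoo η hη).1.le, (hcIoo η hη).2.le⟩
      have h1 : Tendsto (fun _ : ℝ => (0:ℝ)) (nhdsWithin 0 (Set.Ioi 0)) (nhds 0) :=
        tendsto_const_nhds
      have h2 : Tendsto (fun η : ℝ => η) (nhdsWithin 0 (Set.Ioi 0)) (nhds 0) :=
        Filter.tendsto_id.mono_left nhdsWithin_le_nhds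
      exact tendsto_of_tendsto_of_tendsto_of_le_of_le' h1 h2
        (hle.mono fun η h => h.1) (hle.mono fun η h => h.2)
    · filter_upwards [hmem] with η hη
      exact (hcIoo η hη).1
  -- g tendsto 0 within Ioi 0
  have hg0 : Tendsto g (nhdsWithin 0 (Set.Ioi 0)) (nhds 0) := by
    have := (hcont 0 ⟨le_refl 0, hδ⟩)
    rw [ContinuousWithinAt, h0] at this
    refine this.mono_left ?_
    rw [← nhdsWithin_Ioo_eq_nhdsGT hδ]
    exact nhdsWithin_mono 0 Set.Ioo_subset_Ico_self
  -- sqrt ∘ Ffun continuous at 0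
  have hsq : Tendsto (fun x => Real.sqrt (Ffun r q x)) (nhds 0)
      (nhds (Real.sqrt (-Ccoef r q))) := by
    have := (Real.continuous_sqrt.continuousAt.comp (Ffun_contAt r q hr1 hr2))
    rw [ContinuousAt, Function.comp] at this
    simpa [Function.comp_def, Ffun_zero r q hr1 hr2] using this
  have hmain : Tendsto (fun η => Real.sqrt (Ffun r q (g (c η))))
      (nhdsWithin 0 (Set.Ioi 0)) (nhds (Real.sqrt (-Ccoef r q))) :=
    hsq.comp (hg0.comp hc0)
  refine hmain.congr' ?_
  filter_upwards [hmem] with η hη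
  exact hceq η hη
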